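/- The set of cyclic vectors of the backward shift T on c₀(ℂ_p) is dense in c₀(ℂ_p). -/

import Mathlib

open Filter Topology ZeroAtInfty

/-- The backward shift `(x₀,x₁,…) ↦ (x₁,x₂,…)` on `c₀`. -/
noncomputable def bshiftC0 {K : Type*} [NormedField K] (x : C₀(ℕ, K)) : C₀(ℕ, K) where
  toFun := fun n => x (n + 1)
  continuous_toFun := continuous_of_discreteTopology
  zero_at_infty' := by
    rw [cocompact_eq_atTop (α := ℕ)]
    refine (tendsto_add_atTop_iff_nat 1).mpr ?_
    have h := x.zero_at_infty'
    rw [cocompact_eq_atTop (α := ℕ)] at h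
    exact h

section Aux

variable {K : Type*} [NormedField K]

lemma bshiftC0_iterate_apply (x : C₀(ℕ, K)) (m i : ℕ) :
    (bshiftC0^[m] x) i = x (m + i) := by
  induction m generalizing x i with
  | zero => simp
  | succ m ih =>
    rw [Function.iterate_succ_apply, ih]
    show x (m + i + 1) = x (m + 1 + i)
    congr 1; omega

/-- The standard basis vector `e k` in `c₀`. -/
noncomputable def eC0 (k : ℕ) : C₀(ℕ, K) where
  toFun := fun n => if n = k then 1 else 0
  continuous_toFun := continuous_of_discreteTopology
  zero_at_infty' := by
    rw [cocompact_eq_atTop (α := ℕ)]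
    refine tendsto_const_nhds.congr' ?_
    filter_upwards [eventually_ge_atTop (k + 1)] with n hn
    simp only [if_neg (by omega : ¬ n = k)]

@[simp] lemma eC0_apply (k n : ℕ) : (eC0 (K := K) k) n = if n = k then 1 else 0 := rfl

lemma c0_coe_sum {ι : Type*} (s : Finset ι) (f : ι → C₀(ℕ, K)) (i : ℕ) :
    (∑ j ∈ s, f j) i = ∑ j ∈ s, f j i := by
  classical
  induction s using Finset.induction with
  | empty => simp
  | insert h ih => simp_all

lemma c0_norm_le {f : C₀(ℕ, K)} {C : ℝ} (hC : 0 ≤ C) (h : ∀ n, ‖f n‖ ≤ C) : ‖f‖ ≤ C := by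
  rw [← ZeroAtInftyContinuousMap.norm_toBCF_eq_norm]
  exact (BoundedContinuousFunction.norm_le hC).mpr h

/-- The key lemma: a vector whose tail is `c^((n+1)^2)` is cyclic. -/
lemma cyclic_of_tail (y : C₀(ℕ, K)) (c : K) (N : ℕ) (hc : c ≠ 0) (hc1 : ‖c‖ < 1)
    (hy : ∀ n, N ≤ n → y n = c ^ ((n + 1) ^ 2)) :
    (Submodule.span K (Set.range fun n : ℕ => bshiftC0^[n] y)).topologicalClosure = ⊤ := by
  set S := Submodule.span K (Set.range fun n : ℕ => bshiftC0^[n] y) with hS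
  set M := S.topologicalClosure with hMdef
  have hcnorm : (0:ℝ) ≤ ‖c‖ := norm_nonneg c
  have hpow0 : Tendsto (fun n : ℕ => ‖c‖ ^ n) atTop (𝓝 0) :=
    tendsto_pow_atTop_nhds_zero_of_lt_one hcnorm hc1
  -- every basis vector is in M
  have hM : ∀ k, eC0 k ∈ M := by
    intro k
    induction k using Nat.strong_induction_on with
    | _ k ih =>
      set g : ℕ → C₀(ℕ, K) := fun n =>
        (c ^ ((n + k + 1) ^ 2))⁻¹ •
          (bshiftC0^[n] y - ∑ j ∈ Finset.range k, y (n + j) • eC0 j) with hg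
      have hmem : ∀ n, g n ∈ M := by
        intro n
        refine M.smul_mem _ (M.sub_mem ?_ ?_)
        · exact S.le_topologicalClosure (Submodule.subset_span ⟨n, rfl⟩)
        · exact M.sum_mem fun j hj => M.smul_mem _ (ih j (Finset.mem_range.mp hj))
      have hbound : ∀ n, N ≤ n → ‖g n - eC0 k‖ ≤ ‖c‖ ^ n := by
        intro n hn
        refine c0_norm_le (pow_nonneg hcnorm n) fun i => ?_
        have happ : ((g n - eC0 k : C₀(ℕ, K))) i =
            (c ^ ((n + k + 1) ^ 2))⁻¹ *
              (y (n + i) - (if i ∈ Finset.range k then y (n + i) else 0)) -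
              (if i = k then 1 else 0) := by
          simp only [ZeroAtInftyContinuousMap.coe_sub, Pi.sub_apply, hg,
            ZeroAtInftyContinuousMap.coe_smul, Pi.smul_apply, smul_eq_mul, eC0_apply]
          congr 2
          rw [bshiftC0_iterate_apply]
          congr 1
          rw [c0_coe_sum]
          have : ∀ j ∈ Finset.range k, (y (n + j) • eC0 j) i
              = if i = j then y (n + i) else 0 := by
            intro j hj
            simp only [ZeroAtInftyContinuousMap.coe_smul, Pi.smul_apply, smul_eq_mul, eC0_apply,
              mul_ite, mul_one, mul_zero]
            by_cases h : i = j <;> simp [h]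
          rw [Finset.sum_congr rfl this, Finset.sum_ite_eq]
        rcases lt_trichotomy i k with hik | hik | hik
        · rw [happ, if_pos (Finset.mem_range.mpr hik), if_neg (by omega), sub_self, mul_zero,
            sub_zero, norm_zero]
          positivity
        · subst hik
          rw [happ, if_neg (by simp), sub_zero, if_pos rfl, hy (n + i) (by omega),
            inv_mul_cancel₀ (pow_ne_zero _ hc), sub_self, norm_zero]
          positivity
        · have hB : (n + k + 1) ^ 2 + (n + 1) ≤ (n + i + 1) ^ 2 := by nlinarith
          rw [happ, if_neg (by simp [Finset.mem_range]; omega), if_neg (by omega), sub_zero,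
            sub_zero, hy (n + i) (by omega)]
          have hsplit : c ^ ((n + i + 1) ^ 2)
              = c ^ ((n + k + 1) ^ 2) * c ^ ((n + i + 1) ^ 2 - (n + k + 1) ^ 2) := by
            rw [← pow_add]; congr 1; omega
          rw [hsplit, inv_mul_cancel_left₀ (pow_ne_zero _ hc), norm_pow]
          exact pow_le_pow_of_le_one hcnorm hc1.le (by omega)
      have htend : Tendsto g atTop (𝓝 (eC0 k)) := by
        rw [tendsto_iff_norm_sub_tendsto_zero]
        refine squeeze_zero_norm' ?_ hpow0
        · filter_upwards [eventually_ge_atTop N] with n hn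
          simpa using hbound n hn
      exact (Submodule.isClosed_topologicalClosure S).mem_of_tendsto htend
        (Eventually.of_forall hmem)
  -- conclude: every f is in M
  rw [eq_top_iff]
  intro f _
  set P : ℕ → C₀(ℕ, K) := fun n => ∑ k ∈ Finset.range n, f k • eC0 k with hP
  have hPmem : ∀ n, P n ∈ M := fun n =>
    M.sum_mem fun k _ => M.smul_mem _ (hM k)
  have htend : Tendsto P atTop (𝓝 f) := by
    rw [NormedAddCommGroup.tendsto_atTop]
    intro ε hε
    have h0 := f.zero_at_infty'
    rw [cocompact_eq_atTop (α := ℕ)] at h0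
    obtain ⟨N₀, hN₀⟩ := (Metric.tendsto_atTop.mp h0) (ε / 2) (by linarith)
    refine ⟨N₀, fun n hn => ?_⟩
    have : ‖P n - f‖ ≤ ε / 2 := by
      refine c0_norm_le (by linarith) fun i => ?_
      have happ : ((P n - f : C₀(ℕ, K))) i = (if i ∈ Finset.range n then f i else 0) - f i := by
        simp only [ZeroAtInftyContinuousMap.coe_sub, Pi.sub_apply, hP]
        congr 1
        rw [c0_coe_sum]
        have : ∀ k ∈ Finset.range n, (f k • eC0 k) i = if i = k then f i else 0 := by
          intro k hk
          simp only [ZeroAtInftyContinuousMap.coe_smul, Pi.smul_apply, smul_eq_mul, eC0_apply,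
            mul_ite, mul_one, mul_zero]
          by_cases h : i = k <;> simp [h]
        rw [Finset.sum_congr rfl this, Finset.sum_ite_eq]
      by_cases hi : i < n
      · rw [happ, if_pos (Finset.mem_range.mpr hi), sub_self, norm_zero]; linarith
      · rw [happ, if_neg (by simp [Finset.mem_range]; omega), zero_sub, norm_neg]
        have := hN₀ i (by omega)
        rw [dist_zero_right] at this
        change ‖f i‖ < ε / 2 at this
        linarith
    linarith
  exact (Submodule.isClosed_topologicalClosure S).mem_of_tendsto htend
    (Eventually.of_forall hPmem)

end Aux

/-- The set of cyclic vectors of the backward shift `T` on `c₀(ℂ_p)`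
(vectors whose orbit `{Tⁿx : n ≥ 0}` has dense linear span) is dense in `c₀`. -/
theorem cyclic_vectors_dense
    (p : ℕ) [Fact p.Prime] (K : Type*) [NontriviallyNormedField K]
    [IsAlgClosed K] [CompleteSpace K] [IsUltrametricDist K] [Algebra ℚ_[p] K]
    (hK : ∀ q : ℚ_[p], ‖algebraMap ℚ_[p] K q‖ = ‖q‖) :
    Dense {x : C₀(ℕ, K) |
      (Submodule.span K (Set.range fun n : ℕ => bshiftC0^[n] x)).topologicalClosure
        = ⊤} := by
  rw [Metric.dense_iff]
  intro x ε hε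
  -- get N with ‖x n‖ < ε/3 for n ≥ N
  have h0 := x.zero_at_infty'
  rw [cocompact_eq_atTop (α := ℕ)] at h0
  obtain ⟨N, hN⟩ := (Metric.tendsto_atTop.mp h0) (ε / 3) (by linarith)
  -- get a small nonzero c
  obtain ⟨c, hc0, hcsmall⟩ := NormedField.exists_norm_lt K
    (lt_min one_pos (by linarith : (0:ℝ) < ε / 3))
  have hc1 : ‖c‖ < 1 := lt_of_lt_of_le hcsmall (min_le_left _ _)
  have hcε : ‖c‖ < ε / 3 := lt_of_lt_of_le hcsmall (min_le_right _ _)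
  have hcne : c ≠ 0 := fun h => by simp [h] at hc0
  -- the perturbed vector
  set y : C₀(ℕ, K) :=
    { toFun := fun n => if n < N then x n else c ^ ((n + 1) ^ 2)
      continuous_toFun := continuous_of_discreteTopology
      zero_at_infty' := by
        rw [cocompact_eq_atTop (α := ℕ)]
        refine squeeze_zero_norm' ?_
          (tendsto_pow_atTop_nhds_zero_of_lt_one (norm_nonneg c) hc1)
        filter_upwards [eventually_ge_atTop N] with n hn
        rw [if_neg (by omega), norm_pow]
        exact pow_le_pow_of_le_one (norm_nonneg c) hc1.le (by nlinarith) } with hy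
  have hyapp : ∀ n, y n = if n < N then x n else c ^ ((n + 1) ^ 2) := fun n => rfl
  refine ⟨y, ?_, ?_⟩
  · -- y is close to x
    rw [Metric.mem_ball, dist_eq_norm]
    have : ‖y - x‖ ≤ ε / 3 + ε / 3 := by
      refine c0_norm_le (by linarith) fun n => ?_
      rw [ZeroAtInftyContinuousMap.coe_sub, Pi.sub_apply, hyapp]
      by_cases hn : n < N
      · rw [if_pos hn, sub_self, norm_zero]; linarith
      · rw [if_neg hn]
        refine (norm_sub_le _ _).trans (add_le_add ?_ ?_)
        · rw [norm_pow]
          calc ‖c‖ ^ ((n + 1) ^ 2) ≤ ‖c‖ ^ 1 :=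
                pow_le_pow_of_le_one (norm_nonneg c) hc1.le (by nlinarith)
            _ = ‖c‖ := pow_one _
            _ ≤ ε / 3 := hcε.le
        · have := hN n (by omega)
          rw [dist_zero_right] at this
          change ‖x n‖ < ε / 3 at this
          linarith
    linarith
  · -- y is cyclic
    exact cyclic_of_tail y c N hcne hc1 fun n hn => by rw [hyapp, if_neg (by omega)]
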